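/- arXiv:1112.2974 — 4 statements merged into one kernel-verified Lean document; each statement's English description precedes it below -/
import Mathlib

section
/- Let n ≥ 1, X ⊆ {1,...,n} with X ∩ {1,...,⌊n/2⌋} = ∅. Let ψ be a conjunction of edge atoms over ordered variables x_1 < ... < x_m, each x_i quantified by ∃^{≥λ_i} with λ_i ∈ X. Then K_n satisfies the quantified sentence (in the Prover–Adversary game semantics) if and only if the graph D_ψ does not contain, as a subgraph, an (n - λ_i + 1)-star whose n - λ_i + 1 leaves all precede its centre x_i in the variable order. -/
open scoped Classical

/-- The counting-quantifier game with position-dependent witness-set sizes `lam`: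
with `k` moves remaining and play `l` so far, Prover offers a set of `lam l.length`
vertices, Adversary picks one; Prover wins iff the final play satisfies `P`. -/
def qGame {V : Type*} [DecidableEq V] (lam : ℕ → ℕ) (P : List V → Prop) :
    ℕ → List V → Prop
  | 0, l => P l
  | k + 1, l => ∃ S : Finset V, S.card = lam l.length ∧ ∀ v ∈ S, qGame lam P k (l ++ [v])

/-- Once the partial play already violates an atom, Prover can never win. -/
private lemma qg_lose (n m : ℕ) (lam : ℕ → ℕ)
    (hlam : ∀ i < m, n / 2 < lam i ∧ lam i ≤ n) (E : ℕ → ℕ → Prop)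
    (d : Fin n) (t s : ℕ) (hE : E t s) :
    ∀ r (l : List (Fin n)), l.length + r = m → t < l.length → s < l.length →
      l.getD t d = l.getD s d →
      ¬ qGame lam (fun l => ∀ i j, E i j → l.getD i d ≠ l.getD j d) r l := by
  intro r
  induction r with
  | zero => intro l _ ht hs heq hq; exact hq t s hE heq
  | succ r ih =>
    intro l hlen ht hs heq hq
    obtain ⟨S, hS, hall⟩ := hq
    have hpos : 0 < lam l.length := by
      have := (hlam l.length (by omega)).1; omega
    obtain ⟨v, hv⟩ := Finset.card_pos.mp (by rw [hS]; exact hpos)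
    refine ih (l ++ [v]) (by simp; omega) (by simp; omega) (by simp; omega)
      ?_ (hall v hv)
    rw [List.getD_append _ _ _ _ ht, List.getD_append _ _ _ _ hs]; exact heq

/-- If a forbidden star exists, Adversary wins: he keeps the already-played leaf
values pairwise distinct, and at the centre move forces a collision. -/
private lemma qg_adv (n m : ℕ) (lam : ℕ → ℕ)
    (hlam : ∀ i < m, n / 2 < lam i ∧ lam i ≤ n) (E : ℕ → ℕ → Prop)
    (d : Fin n) (i : ℕ) (him : i < m) (T : Finset ℕ)
    (hT : T.card = n - lam i + 1) (hTp : ∀ t ∈ T, t < i ∧ E t i) :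
    ∀ r (l : List (Fin n)), l.length + r = m → l.length ≤ i →
      ((T.filter (· < l.length)).image (fun t => l.getD t d)).card
        = (T.filter (· < l.length)).card →
      ¬ qGame lam (fun l => ∀ i j, E i j → l.getD i d ≠ l.getD j d) r l := by
  intro r
  induction r with
  | zero => intro l hlen hle _ _; omega
  | succ r ih =>
    intro l hlen hle hinj hq
    obtain ⟨S, hS, hall⟩ := hq
    set k := l.length with hk
    have hkm : k < m := by omega
    have hlamk := hlam k hkm
    have hlami := hlam i him
    by_cases hki : k = i
    · -- centre move: force a collision
      have hfilt : T.filter (· < k) = T :=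
        Finset.filter_true_of_mem (fun t ht => by have := (hTp t ht).1; omega)
      rw [hfilt] at hinj
      have hcap : (S ∩ T.image (fun t => l.getD t d)).Nonempty := by
        by_contra hcon
        have hdisj : Disjoint S (T.image (fun t => l.getD t d)) := by
          rwa [Finset.not_nonempty_iff_eq_empty,
            ← Finset.disjoint_iff_inter_eq_empty] at hcon
        have hcu := Finset.card_union_of_disjoint hdisj
        have hle2 : (S ∪ T.image (fun t => l.getD t d)).card ≤ n := by
          simpa using Finset.card_le_univ (S ∪ T.image (fun t => l.getD t d))
        rw [hS, hinj, hT, ← hki] at hcu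
        omega
      obtain ⟨v, hv⟩ := hcap
      have hvS : v ∈ S := (Finset.mem_inter.mp hv).1
      obtain ⟨t, htT, htv⟩ := Finset.mem_image.mp (Finset.mem_inter.mp hv).2
      refine qg_lose n m lam hlam E d t i ((hTp t htT).2) r (l ++ [v])
        (by simp; omega) (by simp; have := (hTp t htT).1; omega) (by simp; omega)
        ?_ (hall v hvS)
      have h1 : (l ++ [v]).getD t d = l.getD t d :=
        List.getD_append _ _ _ _ (by have := (hTp t htT).1; omega)
      have h2 : (l ++ [v]).getD i d = v := by
        rw [← hki, hk, List.getD_append_right _ _ _ _ le_rfl]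
        simp
      rw [h1, h2, htv]
    · have hki' : k < i := lt_of_le_of_ne hle hki
      have hgetD : ∀ v : Fin n, ∀ t ∈ T.filter (· < k),
          (l ++ [v]).getD t d = l.getD t d := by
        intro v t ht
        exact List.getD_append _ _ _ _ (Finset.mem_filter.mp ht).2
      by_cases hkT : k ∈ T
      · -- leaf move: pick a fresh value
        set L := T.filter (· < k) with hL
        have hLsub : L ⊆ T.erase k := by
          intro t ht
          rcases Finset.mem_filter.mp ht with ⟨h1, h2⟩
          exact Finset.mem_erase.mpr ⟨by omega, h1⟩
        have hLcard : L.card ≤ n - lam i := by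
          have := Finset.card_le_card hLsub
          rw [Finset.card_erase_of_mem hkT, hT] at this
          omega
        have himg : (L.image (fun t => l.getD t d)).card < lam k := by
          have := Finset.card_image_le (s := L) (f := fun t => l.getD t d)
          omega
        have hns : ¬ S ⊆ L.image (fun t => l.getD t d) := fun hsub => by
          have := Finset.card_le_card hsub; omega
        obtain ⟨v, hvS, hvI⟩ := Finset.not_subset.mp hns
        refine ih (l ++ [v]) (by simp; omega) (by simp; omega) ?_ (hall v hvS)
        have hfe : (T.filter (· < (l ++ [v]).length)) = insert k L := by
          ext t
          simp only [List.length_append, List.length_singleton, Finset.mem_insert,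
            Finset.mem_filter, hL]
          constructor
          · rintro ⟨h1, h2⟩
            rcases Nat.lt_succ_iff_lt_or_eq.mp h2 with h | h
            · exact Or.inr ⟨h1, h⟩
            · exact Or.inl (by omega)
          · rintro (h | ⟨h1, h2⟩)
            · exact ⟨h ▸ hkT, by omega⟩
            · exact ⟨h1, by omega⟩
        rw [hfe]
        have hknL : k ∉ L := by simp [hL]
        have himeq : L.image (fun t => (l ++ [v]).getD t d)
            = L.image (fun t => l.getD t d) :=
          Finset.image_congr (fun t ht => hgetD v t ht)
        have hvk : (l ++ [v]).getD k d = v := by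
          rw [hk, List.getD_append_right _ _ _ _ le_rfl]; simp
        rw [Finset.image_insert, hvk, himeq, Finset.card_insert_of_notMem hknL,
          Finset.card_insert_of_notMem hvI]
        rw [hL] at hinj ⊢
        omega
      · -- non-leaf move: anything goes
        have hpos : 0 < lam k := by omega
        obtain ⟨v, hvS⟩ := Finset.card_pos.mp (by rw [hS]; exact hpos)
        refine ih (l ++ [v]) (by simp; omega) (by simp; omega) ?_ (hall v hvS)
        have hfe : (T.filter (· < (l ++ [v]).length)) = T.filter (· < k) := by
          ext t
          simp only [List.length_append, List.length_singleton, Finset.mem_filter]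
          constructor
          · rintro ⟨h1, h2⟩
            have hne : t ≠ k := fun h => hkT (h ▸ h1)
            exact ⟨h1, by omega⟩
          · rintro ⟨h1, h2⟩; exact ⟨h1, by omega⟩
        rw [hfe,
          Finset.image_congr (fun t ht => hgetD v t ht)]
        exact hinj

/-- If no forbidden star exists, Prover wins: she always offers values avoiding
the values of all earlier neighbours of the current variable. -/
private lemma qg_prover (n m : ℕ) (hn : 1 ≤ n) (lam : ℕ → ℕ)
    (hlam : ∀ i < m, n / 2 < lam i ∧ lam i ≤ n)
    (E : ℕ → ℕ → Prop) (hsym : ∀ i j, E i j → E j i) (hirr : ∀ i, ¬ E i i)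
    (hrange : ∀ i j, E i j → i < m ∧ j < m) (d : Fin n)
    (hnostar : ¬ ∃ i < m, ∃ T : Finset ℕ,
      T.card = n - lam i + 1 ∧ ∀ t ∈ T, t < i ∧ E t i) :
    ∀ r (l : List (Fin n)), l.length + r = m →
      (∀ t s, t < s → s < l.length → E t s → l.getD t d ≠ l.getD s d) →
      qGame lam (fun l => ∀ i j, E i j → l.getD i d ≠ l.getD j d) r l := by
  intro r
  induction r with
  | zero =>
    intro l hlen hinv
    show ∀ i j, E i j → l.getD i d ≠ l.getD j d
    intro i j hij
    obtain ⟨hi, hj⟩ := hrange i j hij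
    rcases lt_trichotomy i j with h | h | h
    · exact hinv i j h (by omega) hij
    · exact absurd (h ▸ hij) (hirr i)
    · exact (hinv j i h (by omega) (hsym _ _ hij)).symm
  | succ r ih =>
    intro l hlen hinv
    set k := l.length with hk
    have hkm : k < m := by omega
    have hlamk := hlam k hkm
    set N := (Finset.range k).filter (fun t => E t k) with hN
    have hNcard : N.card ≤ n - lam k := by
      by_contra hcon
      push_neg at hcon
      obtain ⟨T, hTsub, hTcard⟩ := Finset.exists_subset_card_eq (s := N)
        (n := n - lam k + 1) (by omega)
      refine hnostar ⟨k, hkm, T, hTcard, fun t ht => ?_⟩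
      have := Finset.mem_filter.mp (hTsub ht)
      exact ⟨Finset.mem_range.mp this.1, this.2⟩
    set img := N.image (fun t => l.getD t d) with himg
    have himgcard : img.card ≤ n - lam k :=
      le_trans Finset.card_image_le hNcard
    have hcompl : lam k ≤ (Finset.univ \ img).card := by
      rw [Finset.card_sdiff_of_subset (Finset.subset_univ _)]
      simp only [Finset.card_univ, Fintype.card_fin]
      omega
    obtain ⟨S, hSsub, hScard⟩ := Finset.exists_subset_card_eq hcompl
    refine ⟨S, hScard, fun v hvS => ?_⟩
    refine ih (l ++ [v]) (by simp; omega) ?_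
    intro t s hts hs hEts
    have hvI : v ∉ img := (Finset.mem_sdiff.mp (hSsub hvS)).2
    have hsk : s ≤ k := by simpa using Nat.lt_succ_iff.mp (by simpa using hs)
    rcases lt_or_eq_of_le hsk with hsk' | hsk'
    · rw [List.getD_append _ _ _ _ (by omega : t < l.length),
        List.getD_append _ _ _ _ (by omega : s < l.length)]
      exact hinv t s hts hsk' hEts
    · subst hsk'
      rw [List.getD_append _ _ _ _ (by omega : t < l.length)]
      have hvk : (l ++ [v]).getD k d = v := by
        rw [hk, List.getD_append_right _ _ _ _ le_rfl]; simp
      rw [hvk]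
      intro heq
      apply hvI
      rw [himg]
      exact Finset.mem_image.mpr ⟨t, Finset.mem_filter.mpr
        ⟨Finset.mem_range.mpr hts, hEts⟩, heq⟩

/-- On the clique `K_n`, when every quantifier `∃^{≥λ_i}` satisfies `λ_i > ⌊n/2⌋`,
the quantified sentence with conjunction graph `E` on variables `0,…,m-1` holds iff
`D_ψ` contains no `(n - λ_i + 1)`-star all of whose leaves precede its centre `i`. -/
theorem clique_game_iff_no_star (n m : ℕ) (hn : 1 ≤ n) (lam : ℕ → ℕ)
    (hlam : ∀ i < m, n / 2 < lam i ∧ lam i ≤ n)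
    (E : ℕ → ℕ → Prop) (hsym : ∀ i j, E i j → E j i) (hirr : ∀ i, ¬ E i i)
    (hrange : ∀ i j, E i j → i < m ∧ j < m) :
    qGame lam
      (fun l : List (Fin n) => ∀ i j, E i j → l.getD i ⟨0, hn⟩ ≠ l.getD j ⟨0, hn⟩)
      m [] ↔
    ¬ ∃ i < m, ∃ T : Finset ℕ, T.card = n - lam i + 1 ∧ ∀ t ∈ T, t < i ∧ E t i := by
  constructor
  · intro hwin ⟨i, him, T, hT, hTp⟩
    refine qg_adv n m lam hlam E ⟨0, hn⟩ i him T hT hTp m [] (by simp) (by simp)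
      ?_ hwin
    have : T.filter (· < ([] : List (Fin n)).length) = ∅ := by
      ext t; simp
    rw [this]; simp
  · intro hns
    exact qg_prover n m hn lam hlam E hsym hirr hrange ⟨0, hn⟩ hns m []
      (by simp) (by intro t s _ hs _; simp at hs)
end

section
/- Let ψ be a conjunction of edge atoms whose graph D_ψ is bipartite with bipartition (A,B), and consider the quantified sentence over C_4 where each variable is quantified by ∃^{≥1} or ∃^{≥2}. Then C_4 satisfies the sentence: Prover wins by offering (subsets of) {0,2} for variables in A and (subsets of) {1,3} for variables in B. Conversely, if D_ψ is not bipartite, C_4 does not satisfy the sentence. -/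
/-- The cycle graph on `ZMod n`: `i` adjacent to `i ± 1`. -/
def cycleGraph (n : ℕ) : SimpleGraph (ZMod n) where
  Adj i j := i ≠ j ∧ (i = j + 1 ∨ j = i + 1)
  symm := by
    constructor
    intro i j h
    exact ⟨h.1.symm, h.2.symm⟩
  loopless := by
    constructor
    intro i h
    exact h.1 rfl

lemma qGame_exists {V : Type*} [DecidableEq V] (lam : ℕ → ℕ) (hpos : ∀ i, 0 < lam i)
    (P : List V → Prop) : ∀ k l, qGame lam P k l → ∃ l', P l' := by
  intro k
  induction k with
  | zero => exact fun l h => ⟨l, h⟩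
  | succ n ih =>
    intro l h
    obtain ⟨S, hcard, hS⟩ := h
    have hne : S.Nonempty := Finset.card_pos.mp (by rw [hcard]; exact hpos _)
    obtain ⟨v, hv⟩ := hne
    exact ih _ (hS v hv)

lemma adj_of_parity : ∀ a b : ZMod 4, a.val % 2 ≠ b.val % 2 →
    a ≠ b ∧ (a = b + 1 ∨ b = a + 1) := by decide

lemma parity_of_adj : ∀ a b : ZMod 4, a ≠ b → (a = b + 1 ∨ b = a + 1) →
    a.val % 2 ≠ b.val % 2 := by decide

/-- A `{1,2}`-quantified conjunctive sentence, with conjunction graph `E` on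
variables `0,…,m-1`, is true on `C_4` iff `D_ψ` is bipartite. -/
theorem c4_game_iff_bipartite (m : ℕ) (lam : ℕ → ℕ)
    (hlam : ∀ i, lam i = 1 ∨ lam i = 2)
    (E : ℕ → ℕ → Prop) (hsym : ∀ i j, E i j → E j i) (hirr : ∀ i, ¬ E i i)
    (hrange : ∀ i j, E i j → i < m ∧ j < m) :
    qGame lam
      (fun l : List (ZMod 4) => ∀ i j, E i j → (cycleGraph 4).Adj (l.getD i 0) (l.getD j 0))
      m [] ↔
    ∃ c : ℕ → Bool, ∀ i j, E i j → c i ≠ c j := by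
  constructor
  · intro h
    have hpos : ∀ i, 0 < lam i := fun i => by rcases hlam i with h | h <;> omega
    obtain ⟨l', hP⟩ := qGame_exists lam hpos _ m [] h
    refine ⟨fun i => decide ((l'.getD i 0).val % 2 = 1), ?_⟩
    intro i j hij
    have hadj := hP i j hij
    obtain ⟨h1, h2⟩ := hadj
    have hpar := parity_of_adj _ _ h1 h2
    intro hcon
    have := decide_eq_decide.mp hcon
    have hm1 : (l'.getD i 0).val % 2 < 2 := Nat.mod_lt _ (by norm_num)
    have hm2 : (l'.getD j 0).val % 2 < 2 := Nat.mod_lt _ (by norm_num)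
    omega
  · rintro ⟨c, hc⟩
    -- Prover's strategy: offer parity-correct vertices.
    suffices H : ∀ k l, l.length + k = m →
        (∀ i, i < l.length → (l.getD i 0).val % 2 = (if c i then 1 else 0)) →
        qGame lam
          (fun l : List (ZMod 4) => ∀ i j, E i j → (cycleGraph 4).Adj (l.getD i 0) (l.getD j 0))
          k l by
      exact H m [] (by simp) (by simp)
    intro k
    induction k with
    | zero =>
      intro l hlen hgood i j hij
      obtain ⟨hi, hj⟩ := hrange i j hij
      simp only [Nat.add_zero] at hlen
      have hpi := hgood i (by omega)
      have hpj := hgood j (by omega)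
      have hcij := hc i j hij
      refine adj_of_parity _ _ ?_
      rw [hpi, hpj]
      cases hci : c i <;> cases hcj : c j <;> simp_all
    | succ n ih =>
      intro l hlen hgood
      refine ⟨(if lam l.length = 1 then (if c l.length then {1} else {0})
        else (if c l.length then {1, 3} else {0, 2}) : Finset (ZMod 4)), ?_, ?_⟩
      · rcases hlam l.length with h1 | h2
        · rw [h1, if_pos rfl]
          split <;> decide
        · rw [h2, if_neg (by norm_num : ¬(2:ℕ) = 1)]
          split <;> decide
      · intro v hv
        have hvpar : v.val % 2 = (if c l.length then 1 else 0) := by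
          split_ifs at hv ⊢ <;> fin_cases hv <;> rfl
        refine ih (l ++ [v]) (by simp; omega) ?_
        intro i hi
        simp only [List.length_append, List.length_singleton] at hi
        rcases Nat.lt_or_ge i l.length with h | h
        · rw [List.getD_append _ _ _ _ h]
          exact hgood i h
        · have hie : i = l.length := by omega
          subst hie
          have : (l ++ [v]).getD l.length 0 = v := by
            rw [List.getD_eq_getElem?_getD, List.getElem?_append_right (le_refl l.length)]
            simp
          rw [this]
          exact hvpar
end

section
/- Let H be a bipartite graph that contains a 4-cycle C_4 as a subgraph. A {1,2}-quantified conjunctive sentence Ψ (each variable quantified by ∃^{≥1} or ∃^{≥2}) is true in H if and only if the graph D_ψ of its quantifier-free part is bipartite. -/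
lemma qGame_exists_run {V : Type*} [DecidableEq V] (lam : ℕ → ℕ) (P : List V → Prop)
    (hlam : ∀ i, 1 ≤ lam i) :
    ∀ k l, qGame lam P k l → ∃ l' : List V, l'.length = k ∧ P (l ++ l') := by
  intro k
  induction k with
  | zero => intro l h; exact ⟨[], rfl, by simpa [qGame] using h⟩
  | succ k ih =>
    intro l h
    obtain ⟨S, hcard, hS⟩ := h
    have hne : S.Nonempty := Finset.card_pos.mp (hcard ▸ hlam l.length)
    obtain ⟨v, hv⟩ := hne
    obtain ⟨l', hlen, hP⟩ := ih (l ++ [v]) (hS v hv)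
    exact ⟨v :: l', by simp [hlen], by simpa using hP⟩

/-- On a bipartite graph `H` containing a 4-cycle `a,b,c,d`, a `{1,2}`-quantified
conjunctive sentence with conjunction graph `E` on variables `0,…,m-1` is true
iff `D_ψ` is bipartite. -/
theorem bipartite_with_c4_game_iff_bipartite {V : Type*} [DecidableEq V]
    (H : SimpleGraph V)
    (hbip : ∃ col : V → Bool, ∀ u v, H.Adj u v → col u ≠ col v)
    (a b c d : V)
    (hab : H.Adj a b) (hbc : H.Adj b c) (hcd : H.Adj c d) (hda : H.Adj d a)
    (hac : a ≠ c) (hbd : b ≠ d)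
    (m : ℕ) (lam : ℕ → ℕ) (hlam : ∀ i, lam i = 1 ∨ lam i = 2)
    (E : ℕ → ℕ → Prop) (hsym : ∀ i j, E i j → E j i) (hirr : ∀ i, ¬ E i i)
    (hrange : ∀ i j, E i j → i < m ∧ j < m) :
    qGame lam
      (fun l : List V => ∀ i j, E i j → H.Adj (l.getD i a) (l.getD j a))
      m [] ↔
    ∃ col : ℕ → Bool, ∀ i j, E i j → col i ≠ col j := by
  obtain ⟨colH, hcolH⟩ := hbip
  constructor
  · intro hgame
    have h1 : ∀ i, 1 ≤ lam i := fun i => by rcases hlam i with h | h <;> omega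
    obtain ⟨l, hlen, hP⟩ := qGame_exists_run lam _ h1 m [] hgame
    simp only [List.nil_append] at hP
    exact ⟨fun i => colH (l.getD i a), fun i j hij => hcolH _ _ (hP i j hij)⟩
  · rintro ⟨col, hcol⟩
    -- condition on a vertex for variable i
    set good : ℕ → V → Prop := fun i v =>
      if col i then v = b ∨ v = d else v = a ∨ v = c with hgood
    have hadj : ∀ i j u v, col i ≠ col j → good i u → good j v → H.Adj u v := by
      intro i j u v hne hu hv
      have key : ∀ u v, (u = a ∨ u = c) → (v = b ∨ v = d) → H.Adj u v := by
        rintro u v (rfl | rfl) (rfl | rfl)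
        · exact hab
        · exact H.adj_symm hda
        · exact H.adj_symm hbc
        · exact hcd
      simp only [hgood] at hu hv
      cases hci : col i <;> cases hcj : col j <;> rw [hci] at hu <;> rw [hcj] at hv <;>
        simp at hu hv
      · exact absurd (hci.trans hcj.symm) hne
      · exact key u v hu hv
      · exact H.adj_symm (key v u hv hu)
      · exact absurd (hci.trans hcj.symm) hne
    have main : ∀ k (l : List V), m ≤ l.length + k →
        (∀ i < l.length, good i (l.getD i a)) →
        qGame lam (fun l : List V => ∀ i j, E i j → H.Adj (l.getD i a) (l.getD j a)) k l := by
      intro k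
      induction k with
      | zero =>
        intro l hm hinv i j hij
        obtain ⟨hi, hj⟩ := hrange i j hij
        have hi' : i < l.length := by omega
        have hj' : j < l.length := by omega
        refine hadj i j _ _ (hcol i j hij) (hinv i hi') (hinv j hj')
      | succ k ih =>
        intro l hm hinv
        set i := l.length with hi
        -- choose the offered set
        refine ⟨(if col i then ({b, d} : Finset V) else ({a, c} : Finset V)).filter
            (fun v => lam i = 2 ∨ v = (if col i then b else a)), ?_, ?_⟩
        · rcases hlam i with h2 | h2 <;> cases hc : col i <;>
            simp [h2, Finset.filter_eq', Finset.filter_true_of_mem,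
              Finset.card_insert_of_notMem, hac, hbd] <;> exact h2.symm
        · intro v hv
          have hvg : good i v := by
            simp only [Finset.mem_filter] at hv
            have hv1 := hv.1
            simp only [hgood]
            cases hc : col i <;> rw [hc] at hv1 <;> simpa using hv1
          refine ih (l ++ [v]) (by simp; omega) ?_
          intro j hj
          simp only [List.length_append, List.length_singleton] at hj
          rcases lt_or_ge j l.length with hjl | hjl
          · rw [List.getD_append _ _ _ _ hjl]
            exact hinv j hjl
          · have : j = l.length := by omega
            subst this
            rw [List.getD_append_right _ _ _ _ hjl]
            simpa using hvg
    exact main m [] (by simp) (by simp)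
end

section
/- In the reflexive 4-cycle C*_4 (vertices 0,1,2,3 with loops and edges between i and i±1 mod 4), the counting quantifiers ∃^{≥2} and ∃^{≥3} are expressible using ∃ and ∀: for any property φ, there exist at least 2 vertices x with φ(x) iff ∀x' ∃x (E(x',x) ∧ φ(x)), and there exist at least 3 vertices x with φ(x) iff ∀x'' ∀x' ∃x (E(x'',x) ∧ E(x',x) ∧ φ(x)). -/
/-- The edge relation of the reflexive 4-cycle `C*_4` on `ZMod 4`. -/
def reflC4 (i j : ZMod 4) : Prop := i = j ∨ i = j + 1 ∨ j = i + 1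

instance : ∀ i j, Decidable (reflC4 i j) := fun i j => by
  unfold reflC4; infer_instance

lemma reflC4_bool (b : ZMod 4 → Bool) :
    (2 ≤ (Finset.univ.filter (fun x => b x = true)).card ↔
      ∀ x', ∃ x, reflC4 x' x ∧ b x = true) ∧
    (3 ≤ (Finset.univ.filter (fun x => b x = true)).card ↔
      ∀ x'' x', ∃ x, reflC4 x'' x ∧ reflC4 x' x ∧ b x = true) := by
  revert b; decide

/-- On the reflexive 4-cycle, `∃^{≥2}` and `∃^{≥3}` are expressible with `∃`, `∀`
and the edge relation: `|{x : φ x}| ≥ 2` iff every vertex has an `E`-neighbour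
satisfying `φ`, and `|{x : φ x}| ≥ 3` iff every pair of vertices has a common
`E`-neighbour satisfying `φ`. -/
theorem reflC4_counting_expressible (φ : ZMod 4 → Prop) :
    (2 ≤ {x | φ x}.ncard ↔ ∀ x', ∃ x, reflC4 x' x ∧ φ x) ∧
    (3 ≤ {x | φ x}.ncard ↔ ∀ x'' x', ∃ x, reflC4 x'' x ∧ reflC4 x' x ∧ φ x) := by
  classical
  set b : ZMod 4 → Bool := fun x => decide (φ x) with hb
  have hφ : ∀ x, φ x ↔ b x = true := by
    intro x; simp [hb]
  have hset : {x | φ x} = ↑(Finset.univ.filter (fun x => b x = true)) := by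
    ext x; simp [hφ x]
  have hcard : {x | φ x}.ncard = (Finset.univ.filter (fun x => b x = true)).card := by
    rw [hset, Set.ncard_coe_finset]
  obtain ⟨h1, h2⟩ := reflC4_bool b
  constructor
  · rw [hcard, h1]
    exact forall_congr' fun x' => exists_congr fun x => by rw [hφ x]
  · rw [hcard, h2]
    exact forall_congr' fun x'' => forall_congr' fun x' =>
      exists_congr fun x => by rw [hφ x]
end
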